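/- Let ζ ∈ C_c^∞(ℝ³;[0,∞)) be radially symmetric with ∫ζ = 1 and supp ζ ⊂⊂ B₁, and set ζ_σ(x) := σ^{−3}ζ(x/σ). There exists σ₀′ > 0 (independent of E) such that the following holds. Let E ⊆ ℤ³ be finite, let i ∈ E, and suppose E is a simple coordinate laminate in Q₃(i) with normal e₃, i.e. there is h: ℤ → {0,1} with χ_E(j) = h(j₃) for every j ∈ ℤ³ ∩ Q₃(i). Let T := cl(Q₁(i)) ∩ {x : x₃ = i₃ + 1/2} be the top face of the closed unit cube at i, and assume T ⊆ ∂Q(E), where Q(E) := ⋃_{j∈E} Q₁(j) (equivalently h(i₃) = 1 and h(i₃+1) = 0). Then for every σ ∈ (0, σ₀′] and every x ∈ ℝ³ with dist(x,T) < 2σ one has ∇(χ_{Q(E)} ⋆ ζ_σ)(x) = −λ(x)·e₃ for some λ(x) ≥ 0; in particular ∂₁(χ_{Q(E)} ⋆ ζ_σ)(x) = ∂₂(χ_{Q(E)} ⋆ ζ_σ)(x) = 0 and ∂₃(χ_{Q(E)} ⋆ ζ_σ)(x) ≤ 0. -/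

import Mathlib

open Set Filter MeasureTheory Metric
open scoped BigOperators ENNReal Topology

noncomputable section

/-- Three-dimensional Euclidean space. -/
abbrev E3 := EuclideanSpace ℝ (Fin 3)

/-- The half-open cube `Q_ρ(x) = x + ρ[-1/2,1/2)³`. -/
def cube (ρ : ℝ) (x : E3) : Set E3 := {y | ∀ k, x k - ρ / 2 ≤ y k ∧ y k < x k + ρ / 2}

/-- Embedding of `ℤ³` into `ℝ³`. -/
def toE3 (z : Fin 3 → ℤ) : E3 := WithLp.toLp 2 (fun j => (z j : ℝ))

/-- `Q(E) := ⋃_{i ∈ E} Q₁(i)`. -/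
def QE (E : Finset (Fin 3 → ℤ)) : Set E3 := ⋃ i ∈ E, cube 1 (toE3 i)

/-- The mollified indicator `(χ_{Q(E)} ⋆ ζ_σ)(x) = ∫_{Q(E)} σ⁻³ ζ(σ⁻¹(x-y)) dy`. -/
noncomputable def mollify (ζ : E3 → ℝ) (σ : ℝ) (E : Finset (Fin 3 → ℤ)) (x : E3) : ℝ :=
  ∫ y in QE E, σ⁻¹ ^ 3 * ζ (σ⁻¹ • (x - y))

open scoped Convolution

lemma abs_coord_le (u : E3) (k : Fin 3) : |u k| ≤ ‖u‖ := by
  rw [EuclideanSpace.norm_eq]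
  rw [← Real.sqrt_sq_eq_abs]
  apply Real.sqrt_le_sqrt
  have : (u k)^2 = ‖u k‖^2 := by rw [Real.norm_eq_abs, sq_abs]
  rw [this]
  exact Finset.single_le_sum (f := fun i => ‖u i‖^2) (fun i _ => sq_nonneg _) (Finset.mem_univ k)

lemma cube_measurable (ρ : ℝ) (x : E3) : MeasurableSet (cube ρ x) := by
  have : cube ρ x = ⋂ k, ((EuclideanSpace.proj k : E3 →L[ℝ] ℝ) ⁻¹' (Set.Ico (x k - ρ/2) (x k + ρ/2))) := by
    ext y; simp [cube, Set.mem_iInter, Set.mem_Ico]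
  rw [this]
  exact MeasurableSet.iInter fun k =>
    ((EuclideanSpace.proj k : E3 →L[ℝ] ℝ).continuous.measurable) measurableSet_Ico

lemma QE_measurable (E : Finset (Fin 3 → ℤ)) : MeasurableSet (QE E) :=
  MeasurableSet.biUnion E.countable_toSet (fun i _ => cube_measurable 1 (toE3 i))

lemma halfspace_measurable (c : ℝ) : MeasurableSet {y : E3 | y 2 < c} :=
  measurableSet_lt ((EuclideanSpace.proj (2 : Fin 3) : E3 →L[ℝ] ℝ).continuous.measurable) measurable_const

variable {ζ : E3 → ℝ} {σ : ℝ}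


-- kernel
def mker (ζ : E3 → ℝ) (σ : ℝ) : E3 → ℝ := fun z => σ⁻¹ ^ 3 * ζ (σ⁻¹ • z)

lemma mker_contDiff (hsm : ContDiff ℝ (⊤ : ℕ∞) ζ) : ContDiff ℝ (⊤ : ℕ∞) (mker ζ σ) :=
  contDiff_const.mul (hsm.comp (contDiff_const_smul σ⁻¹))

lemma mker_support (hσ : 0 < σ) (hsupp : tsupport ζ ⊆ Metric.ball 0 1) :
    ∀ z : E3, σ ≤ ‖z‖ → mker ζ σ z = 0 := by
  intro z hz
  have : ζ (σ⁻¹ • z) = 0 := by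
    by_contra hne
    have h1 : σ⁻¹ • z ∈ tsupport ζ := subset_tsupport ζ hne
    have h2 := hsupp h1
    rw [Metric.mem_ball, dist_zero_right, norm_smul, norm_inv, Real.norm_eq_abs,
      abs_of_pos hσ] at h2
    have := (inv_mul_lt_iff₀ hσ).mp h2
    linarith
  simp [mker, this]

lemma mker_hasCompactSupport (hσ : 0 < σ) (hsupp : tsupport ζ ⊆ Metric.ball 0 1) :
    HasCompactSupport (mker ζ σ) := by
  apply HasCompactSupport.of_support_subset_isCompact (isCompact_closedBall (0 : E3) σ)
  intro z hz
  rw [Function.mem_support] at hz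
  rw [mem_closedBall, dist_zero_right]
  by_contra hlt
  exact hz (mker_support hσ hsupp z (le_of_lt (not_le.mp hlt)))

lemma mker_nonneg (hσ : 0 < σ) (hpos : ∀ x, 0 ≤ ζ x) : ∀ z, 0 ≤ mker ζ σ z := fun z =>
  mul_nonneg (pow_nonneg (inv_nonneg.mpr hσ.le) 3) (hpos _)


-- the half-space mollification
def hsF (ζ : E3 → ℝ) (σ c : ℝ) : E3 → ℝ :=
  fun x => ∫ y in {y : E3 | y 2 < c}, σ⁻¹ ^ 3 * ζ (σ⁻¹ • (x - y))

lemma hsF_eq_convolution (c : ℝ) :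
    hsF ζ σ c = (({y : E3 | y 2 < c}).indicator (fun _ => (1:ℝ)))
      ⋆[ContinuousLinearMap.lsmul ℝ ℝ, volume] (mker ζ σ) := by
  funext x
  rw [hsF, convolution, ← integral_indicator (halfspace_measurable c)]
  congr 1
  funext y
  by_cases hy : y ∈ {y : E3 | y 2 < c} <;>
    simp [hy, Set.indicator_of_mem, Set.indicator_of_notMem, mker]

lemma hsF_contDiff (hsm : ContDiff ℝ (⊤ : ℕ∞) ζ) (hσ : 0 < σ)
    (hsupp : tsupport ζ ⊆ Metric.ball 0 1) (c : ℝ) :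
    ContDiff ℝ (⊤ : ℕ∞) (hsF ζ σ c) := by
  rw [hsF_eq_convolution]
  exact (mker_hasCompactSupport hσ hsupp).contDiff_convolution_right _
    ((locallyIntegrable_const (1:ℝ)).indicator (halfspace_measurable c))
    (mker_contDiff hsm)

lemma coord_add (x y : E3) (k : Fin 3) : (x + y) k = x k + y k := rfl
lemma coord_smul (t : ℝ) (x : E3) (k : Fin 3) : (t • x) k = t * x k := rfl

def ee2 : E3 := EuclideanSpace.single 2 1

lemma ee2_apply (k : Fin 3) : ee2 k = if k = 2 then 1 else 0 := by
  simp [ee2, EuclideanSpace.single_apply]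

lemma ee2_coord : ee2 2 = 1 ∧ ee2 0 = 0 ∧ ee2 1 = 0 := by
  refine ⟨?_, ?_, ?_⟩ <;> simp [ee2, EuclideanSpace.single_apply]

-- translation invariance in directions with vanishing 2nd coordinate
lemma hsF_translate (c : ℝ) (a : E3) (ha : a 2 = 0) (x : E3) :
    hsF ζ σ c (x + a) = hsF ζ σ c x := by
  have key : ∀ w : E3, hsF ζ σ c w
      = ∫ y, ({y : E3 | y 2 < c}).indicator (fun y => mker ζ σ (w - y)) y := by
    intro w
    rw [hsF, ← integral_indicator (halfspace_measurable c)]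
    rfl
  rw [key, key]
  rw [← integral_add_right_eq_self
    (fun y => ({y : E3 | y 2 < c}).indicator (fun y => mker ζ σ (x + a - y)) y) a]
  congr 1
  funext y
  have h2 : (y + a) 2 = y 2 := by rw [coord_add, ha, add_zero]
  have hmem : (y + a) ∈ {y : E3 | y 2 < c} ↔ y ∈ {y : E3 | y 2 < c} := by
    simp [Set.mem_setOf_eq, h2]
  by_cases hy : y ∈ {y : E3 | y 2 < c}
  · rw [Set.indicator_of_mem (hmem.mpr hy), Set.indicator_of_mem hy]
    congr 1
    abel
  · rw [Set.indicator_of_notMem (fun hc => hy (hmem.mp hc)), Set.indicator_of_notMem hy]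

lemma hsF_antitone (hsm : ContDiff ℝ (⊤ : ℕ∞) ζ) (hσ : 0 < σ)
    (hsupp : tsupport ζ ⊆ Metric.ball 0 1) (hpos : ∀ x, 0 ≤ ζ x) (c : ℝ) (x : E3)
    {s : ℝ} (hs : 0 ≤ s) : hsF ζ σ c (x + s • ee2) ≤ hsF ζ σ c x := by
  have hker_int : Integrable (mker ζ σ) volume :=
    ((mker_contDiff hsm).continuous).integrable_of_hasCompactSupport
      (mker_hasCompactSupport hσ hsupp)
  have hint : ∀ w : E3, Integrable (fun y : E3 => mker ζ σ (w - y)) volume := by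
    intro w
    exact (integrable_comp_sub_left (mker ζ σ) w).mpr hker_int
  have key : ∀ w : E3, hsF ζ σ c w
      = ∫ y, ({y : E3 | y 2 < c}).indicator (fun y => mker ζ σ (w - y)) y := by
    intro w
    rw [hsF, ← integral_indicator (halfspace_measurable c)]
    rfl
  rw [key, key]
  rw [← integral_add_right_eq_self
    (fun y => ({y : E3 | y 2 < c}).indicator (fun y => mker ζ σ (x + s • ee2 - y)) y) (s • ee2)]
  have hs2 : ∀ y : E3, (y + s • ee2) 2 = y 2 + s := by
    intro y; rw [coord_add, coord_smul, ee2_coord.1, mul_one]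
  have step : ∀ y : E3,
      ({y : E3 | y 2 < c}).indicator (fun z => mker ζ σ (x + s • ee2 - z)) (y + s • ee2)
      = ({y : E3 | y 2 + s < c}).indicator (fun z => mker ζ σ (x - z)) y := by
    intro y
    by_cases hy : y 2 + s < c
    · rw [Set.indicator_of_mem (by simpa [Set.mem_setOf_eq, hs2 y] using hy),
        Set.indicator_of_mem (by simpa [Set.mem_setOf_eq] using hy)]
      congr 1
      abel
    · rw [Set.indicator_of_notMem (by simpa [Set.mem_setOf_eq, hs2 y] using hy),
        Set.indicator_of_notMem (by simpa [Set.mem_setOf_eq] using hy)]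
  simp only [step]
  have hmeas : MeasurableSet {y : E3 | y 2 + s < c} := by
    have : {y : E3 | y 2 + s < c} = {y : E3 | y 2 < c - s} := by
      ext y; simp [Set.mem_setOf_eq]; constructor <;> intro <;> linarith
    rw [this]; exact halfspace_measurable (c - s)
  apply integral_mono ((hint x).indicator hmeas) ((hint x).indicator (halfspace_measurable c))
  intro y
  by_cases hy : y 2 + s < c
  · rw [Set.indicator_of_mem (by simpa using hy),
      Set.indicator_of_mem (show y ∈ {y : E3 | y 2 < c} by simp only [Set.mem_setOf_eq]; linarith)]
  · rw [Set.indicator_of_notMem (by simpa using hy)]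
    exact Set.indicator_nonneg (fun z _ => mker_nonneg hσ hpos _) y

lemma deriv_nonpos_of_antitone {φ : ℝ → ℝ} {d : ℝ} (hφ : Antitone φ)
    (hd : HasDerivAt φ d 0) : d ≤ 0 := by
  have h := hasDerivAt_iff_tendsto_slope.mp hd
  have h2 : Tendsto (slope φ 0) (𝓝[>] 0) (𝓝 d) :=
    h.mono_left (nhdsWithin_mono 0 (fun t (ht : t ∈ Set.Ioi (0:ℝ)) => ne_of_gt ht))
  refine le_of_tendsto h2 ?_
  filter_upwards [self_mem_nhdsWithin] with t ht
  have ht' : (0:ℝ) < t := ht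
  have : φ t ≤ φ 0 := hφ ht'.le
  rw [slope_def_field]
  have : (φ t - φ 0) / (t - 0) ≤ 0 := div_nonpos_of_nonpos_of_nonneg (by linarith) (by linarith)
  simpa [div_eq_iff] using this

lemma hsF_hasDerivAt_line (hsm : ContDiff ℝ (⊤ : ℕ∞) ζ) (hσ : 0 < σ)
    (hsupp : tsupport ζ ⊆ Metric.ball 0 1) (c : ℝ) (x a : E3) :
    HasDerivAt (fun t : ℝ => hsF ζ σ c (x + t • a)) (fderiv ℝ (hsF ζ σ c) x a) 0 := by
  have hdiff : DifferentiableAt ℝ (hsF ζ σ c) x :=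
    ((hsF_contDiff hsm hσ hsupp c).differentiable (by simp)).differentiableAt
  have hinner : HasDerivAt (fun t : ℝ => x + t • a) a 0 := by
    have h1 : HasDerivAt (fun t : ℝ => t • a) ((1:ℝ) • a) 0 := (hasDerivAt_id 0).smul_const a
    rw [one_smul] at h1
    exact h1.const_add x
  have h0 : x + (0:ℝ) • a = x := by simp
  have := HasFDerivAt.comp_hasDerivAt (x := (0:ℝ)) (h0 ▸ hdiff.hasFDerivAt) hinner
  rw [h0] at this
  exact this

lemma hsF_fderiv_structure (hsm : ContDiff ℝ (⊤ : ℕ∞) ζ) (hσ : 0 < σ)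
    (hsupp : tsupport ζ ⊆ Metric.ball 0 1) (hpos : ∀ x, 0 ≤ ζ x) (c : ℝ) (x : E3) :
    ∃ lam : ℝ, 0 ≤ lam ∧ ∀ v : E3, fderiv ℝ (hsF ζ σ c) x v = -(lam * v 2) := by
  set D := fderiv ℝ (hsF ζ σ c) x with hD
  -- directions orthogonal to e2 give zero derivative
  have hzero : ∀ a : E3, a 2 = 0 → D a = 0 := by
    intro a ha
    have hline := hsF_hasDerivAt_line hsm hσ hsupp c x a
    have hconst : (fun t : ℝ => hsF ζ σ c (x + t • a)) = fun _ => hsF ζ σ c x := by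
      funext t
      exact hsF_translate c (t • a) (by rw [coord_smul, ha, mul_zero]) x
    rw [hconst] at hline
    exact hline.unique (hasDerivAt_const 0 _)
  -- derivative along e2 is nonpositive
  have hneg : D ee2 ≤ 0 := by
    apply deriv_nonpos_of_antitone ?_ (hsF_hasDerivAt_line hsm hσ hsupp c x ee2)
    intro t t' htt'
    have : x + t' • ee2 = (x + t • ee2) + (t' - t) • ee2 := by
      rw [sub_smul]; abel
    show hsF ζ σ c (x + t' • ee2) ≤ hsF ζ σ c (x + t • ee2)
    rw [this]
    exact hsF_antitone hsm hσ hsupp hpos c (x + t • ee2) (by linarith)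
  refine ⟨-(D ee2), by linarith, fun v => ?_⟩
  have hsplit : v = (v - v 2 • ee2) + v 2 • ee2 := by abel
  have ha : (v - v 2 • ee2) 2 = 0 := by
    have : (v - v 2 • ee2) 2 = v 2 - v 2 * ee2 2 := rfl
    rw [this, ee2_coord.1, mul_one, sub_self]
  calc D v = D ((v - v 2 • ee2) + v 2 • ee2) := by rw [← hsplit]
    _ = D (v - v 2 • ee2) + v 2 • D ee2 := by rw [map_add, ContinuousLinearMap.map_smul]
    _ = v 2 * D ee2 := by rw [hzero _ ha, zero_add, smul_eq_mul]
    _ = -(-(D ee2) * v 2) := by ring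

lemma mem_cube1_iff (j : Fin 3 → ℤ) (y : E3) :
    y ∈ cube 1 (toE3 j) ↔ ∀ k, j k = ⌊y k + 1/2⌋ := by
  constructor
  · intro hy k
    have h := hy k
    simp only [toE3] at h
    symm
    rw [Int.floor_eq_iff]
    constructor
    · linarith [h.1]
    · push_cast; linarith [h.2]
  · intro hj k
    have h1 : ((j k : ℝ)) ≤ y k + 1/2 := by rw [hj k]; exact Int.floor_le _
    have h2 : y k + 1/2 < j k + 1 := by
      have := Int.lt_floor_add_one (y k + 1/2)
      rw [hj k]; push_cast; linarith
    simp only [cube, toE3, Set.mem_setOf_eq] at *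
    constructor <;> linarith

lemma closure_cube_subset (x : E3) :
    closure (cube 1 x) ⊆ {y : E3 | ∀ k, |y k - x k| ≤ 1/2} := by
  apply closure_minimal
  · intro y hy k
    have h := hy k
    rw [abs_le]
    constructor <;> [linarith [h.1]; linarith [h.2]]
  · have : {y : E3 | ∀ k, |y k - x k| ≤ 1/2}
        = ⋂ k, {y : E3 | |y k - x k| ≤ 1/2} := by
      ext y; simp [Set.mem_iInter]
    rw [this]
    exact isClosed_iInter fun k => isClosed_le
      (((EuclideanSpace.proj k : E3 →L[ℝ] ℝ).continuous.sub continuous_const).abs)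
      continuous_const

lemma topcenter_mem (i : Fin 3 → ℤ) :
    (toE3 i + (1/2 : ℝ) • ee2) ∈
      closure (cube 1 (toE3 i)) ∩ {x : E3 | x 2 = (i 2 : ℝ) + 1 / 2} := by
  constructor
  · refine mem_closure_of_tendsto (f := fun n : ℕ => toE3 i + (1/2 - (1/2) * (1/((n:ℝ)+1))) • ee2)
      (b := Filter.atTop) ?_ ?_
    · have h0 : Tendsto (fun n : ℕ => 1/((n:ℝ)+1)) atTop (𝓝 0) :=
        tendsto_one_div_add_atTop_nhds_zero_nat
      have h1 : Tendsto (fun n : ℕ => 1/2 - (1/2) * (1/((n:ℝ)+1))) atTop (𝓝 (1/2 : ℝ)) := by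
        have := (h0.const_mul (1/2 : ℝ)).const_sub (1/2 : ℝ)
        simpa using this
      exact (h1.smul_const ee2).const_add (toE3 i)
    · filter_upwards with n
      intro k
      have hpos : (0:ℝ) < ((n:ℝ)+1)⁻¹ := by positivity
      have hle : ((n:ℝ)+1)⁻¹ ≤ 1 := by
        rw [inv_le_one_iff₀]; right; linarith [Nat.cast_nonneg (α := ℝ) n]
      have hco : (toE3 i + (1/2 - (1/2) * (1/((n:ℝ)+1))) • ee2) k
          = (i k : ℝ) + (1/2 - (1/2) * (1/((n:ℝ)+1))) * ee2 k := rfl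
      simp only [toE3, hco]
      fin_cases k <;> simp [ee2_apply] <;> norm_num <;> constructor <;> linarith
  · show (toE3 i + (1/2 : ℝ) • ee2) 2 = (i 2 : ℝ) + 1/2
    have : (toE3 i + (1/2 : ℝ) • ee2) 2 = (i 2 : ℝ) + (1/2) * ee2 2 := rfl
    rw [this, ee2_coord.1, mul_one]

lemma laminate_local (E : Finset (Fin 3 → ℤ)) (i : Fin 3 → ℤ) (h : ℤ → Prop)
    (hh : ∀ j : Fin 3 → ℤ, toE3 j ∈ cube 3 (toE3 i) → (j ∈ E ↔ h (j 2)))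
    (hE2 : h (i 2)) (hE3 : ¬ h (i 2 + 1)) (y : E3)
    (hy : ∀ k, |y k - (i k : ℝ)| < 3/4) (hy2 : |y 2 - ((i 2 : ℝ) + 1/2)| < 1/4) :
    y ∈ QE E ↔ y 2 < (i 2 : ℝ) + 1/2 := by
  have floor_bound : ∀ k, (i k : ℝ) - 3/2 ≤ (⌊y k + 1/2⌋ : ℝ) ∧ ((⌊y k + 1/2⌋ : ℝ)) < i k + 3/2 := by
    intro k
    have h1 := abs_lt.mp (hy k)
    have hf1 : (i k - 1 : ℤ) ≤ ⌊y k + 1/2⌋ := by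
      rw [Int.le_floor]; push_cast; linarith
    have hf2 : ⌊y k + 1/2⌋ < i k + 2 := by
      rw [Int.floor_lt]; push_cast; linarith
    constructor
    · have : ((i k - 1 : ℤ) : ℝ) ≤ (⌊y k + 1/2⌋ : ℝ) := by exact_mod_cast hf1
      push_cast at this; linarith
    · have hf2' : ⌊y k + 1/2⌋ ≤ i k + 1 := by omega
      have : ((⌊y k + 1/2⌋ : ℤ) : ℝ) ≤ ((i k + 1 : ℤ) : ℝ) := by exact_mod_cast hf2'
      push_cast at this; linarith
  have habs2 := abs_lt.mp hy2
  constructor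
  · rintro hyQ
    rw [QE, Set.mem_iUnion₂] at hyQ
    obtain ⟨j, hjE, hyj⟩ := hyQ
    have hjf := (mem_cube1_iff j y).mp hyj
    have hj3 : toE3 j ∈ cube 3 (toE3 i) := by
      intro k
      have := floor_bound k
      simp only [toE3]
      rw [hjf k]
      constructor <;> linarith [this.1, this.2]
    have hhj : h (j 2) := (hh j hj3).mp hjE
    by_contra hge
    push_neg at hge
    have : j 2 = i 2 + 1 := by
      rw [hjf 2, Int.floor_eq_iff]
      push_cast
      constructor <;> linarith
    rw [this] at hhj
    exact hE3 hhj
  · intro hlt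
    set j : Fin 3 → ℤ := fun k => ⌊y k + 1/2⌋ with hjdef
    have hyj : y ∈ cube 1 (toE3 j) := (mem_cube1_iff j y).mpr (fun k => rfl)
    have hj3 : toE3 j ∈ cube 3 (toE3 i) := by
      intro k
      have := floor_bound k
      simp only [toE3, hjdef]
      constructor <;> linarith [this.1, this.2]
    have hj2 : j 2 = i 2 := by
      simp only [hjdef]
      rw [Int.floor_eq_iff]
      push_cast
      constructor <;> linarith
    have hjE : j ∈ E := (hh j hj3).mpr (by rw [hj2]; exact hE2)
    rw [QE, Set.mem_iUnion₂]
    exact ⟨j, hjE, hyj⟩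

lemma coord_sub (x y : E3) (k : Fin 3) : (x - y) k = x k - y k := rfl

lemma cube3_self (i : Fin 3 → ℤ) : toE3 i ∈ cube 3 (toE3 i) := by
  intro k
  simp only [toE3]
  constructor <;> linarith

lemma not_h_above (E : Finset (Fin 3 → ℤ)) (i : Fin 3 → ℤ) (hi : i ∈ E) (h : ℤ → Prop)
    (hh : ∀ j : Fin 3 → ℤ, toE3 j ∈ cube 3 (toE3 i) → (j ∈ E ↔ h (j 2)))
    (hfr : closure (cube 1 (toE3 i)) ∩ {x : E3 | x 2 = (i 2 : ℝ) + 1 / 2} ⊆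
      frontier (QE E)) : ¬ h (i 2 + 1) := by
  intro hcontra
  set p : E3 := toE3 i + (1/2 : ℝ) • ee2 with hp
  have hpk : ∀ k, p k = (i k : ℝ) + (1/2) * ee2 k := fun k => rfl
  have hee : ∀ k : Fin 3, k ≠ 2 → ee2 k = 0 := by
    intro k hk; rw [ee2_apply, if_neg hk]
  have hsub : Metric.ball p (1/4) ⊆ QE E := by
    intro y hy
    rw [Metric.mem_ball, dist_eq_norm] at hy
    have hyk : ∀ k, |y k - p k| < 1/4 := by
      intro k
      calc |y k - p k| = |(y - p) k| := by rw [coord_sub]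
        _ ≤ ‖y - p‖ := abs_coord_le _ _
        _ < 1/4 := hy
    by_cases hc : y 2 < (i 2 : ℝ) + 1/2
    · have hyc : y ∈ cube 1 (toE3 i) := by
        intro k
        have hk' := abs_lt.mp (hyk k)
        rw [hpk k] at hk'
        simp only [toE3]
        by_cases hk : k = 2
        · subst hk
          rw [ee2_coord.1] at hk'
          constructor <;> linarith [hk'.1, hk'.2, hc]
        · rw [hee k hk] at hk'
          constructor <;> [linarith [hk'.1]; linarith [hk'.2]]
      rw [QE, Set.mem_iUnion₂]
      exact ⟨i, hi, hyc⟩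
    · push_neg at hc
      set j' : Fin 3 → ℤ := Function.update i 2 (i 2 + 1) with hj'
      have hj'2 : j' 2 = i 2 + 1 := Function.update_self 2 (i 2 + 1) i
      have hj'k : ∀ k, k ≠ 2 → j' k = i k := fun k hk => Function.update_of_ne hk _ i
      have hyc : y ∈ cube 1 (toE3 j') := by
        intro k
        have hk' := abs_lt.mp (hyk k)
        rw [hpk k] at hk'
        simp only [toE3]
        by_cases hk : k = 2
        · subst hk
          rw [ee2_coord.1] at hk'
          rw [hj'2]
          push_cast
          constructor <;> linarith [hk'.1, hk'.2, hc]
        · rw [hj'k k hk]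
          rw [hee k hk] at hk'
          constructor <;> [linarith [hk'.1]; linarith [hk'.2]]
      have hj'E : j' ∈ E := by
        refine (hh j' ?_).mpr (by rw [hj'2]; exact hcontra)
        intro k
        simp only [toE3]
        by_cases hk : k = 2
        · subst hk; rw [hj'2]; push_cast; constructor <;> linarith
        · rw [hj'k k hk]; constructor <;> linarith
      rw [QE, Set.mem_iUnion₂]
      exact ⟨j', hj'E, hyc⟩
  have hintr : p ∈ interior (QE E) :=
    mem_interior.mpr ⟨Metric.ball p (1/4), hsub, Metric.isOpen_ball, Metric.mem_ball_self (by norm_num)⟩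
  have hfrp := hfr (topcenter_mem i)
  exact (hfrp.2 : p ∉ interior (QE E)) hintr


/-- Near a flat laminate interface the gradient of the mollified
indicator points in the direction `-e₃`:  there is `σ₀' > 0`, independent of `E`, such
that whenever `E` is a simple coordinate laminate with normal `e₃` in `Q₃(i)` around
`i ∈ E`, and the top face `T` of the closed unit cube at `i` lies on `∂Q(E)`, then for
all `σ ∈ (0,σ₀']` and all `x` with `dist(x,T) < 2σ` one has
`∇(χ_{Q(E)} ⋆ ζ_σ)(x) = -λ(x)·e₃` with `λ(x) ≥ 0`. -/
theorem statement6 (ζ : E3 → ℝ)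
    (hsm : ContDiff ℝ (⊤ : ℕ∞) ζ) (hcs : HasCompactSupport ζ)
    (hpos : ∀ x, 0 ≤ ζ x) (hrad : ∀ x y : E3, ‖x‖ = ‖y‖ → ζ x = ζ y)
    (hint : (∫ x, ζ x) = 1) (hsupp : tsupport ζ ⊆ Metric.ball 0 1) :
    ∃ σ₀' : ℝ, 0 < σ₀' ∧
      ∀ (E : Finset (Fin 3 → ℤ)) (i : Fin 3 → ℤ), i ∈ E →
      ∀ h : ℤ → Prop,
        (∀ j : Fin 3 → ℤ, toE3 j ∈ cube 3 (toE3 i) → (j ∈ E ↔ h (j 2))) →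
        closure (cube 1 (toE3 i)) ∩ {x : E3 | x 2 = (i 2 : ℝ) + 1 / 2} ⊆
          frontier (QE E) →
        ∀ σ : ℝ, 0 < σ → σ ≤ σ₀' →
        ∀ x : E3,
          Metric.infDist x
              (closure (cube 1 (toE3 i)) ∩ {x : E3 | x 2 = (i 2 : ℝ) + 1 / 2}) <
            2 * σ →
          ∃ lam : ℝ, 0 ≤ lam ∧
            ∀ v : E3, fderiv ℝ (mollify ζ σ E) x v = -(lam * v 2) := by
  refine ⟨1/12, by norm_num, ?_⟩
  intro E i hi h hh hfr σ hσ hσ' x hx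
  set c : ℝ := (i 2 : ℝ) + 1/2 with hc
  set T : Set E3 := closure (cube 1 (toE3 i)) ∩ {x : E3 | x 2 = (i 2 : ℝ) + 1 / 2} with hT
  have hE2 : h (i 2) := (hh i (cube3_self i)).mp hi
  have hE3 : ¬ h (i 2 + 1) := not_h_above E i hi h hh hfr
  have hTne : T.Nonempty := ⟨_, topcenter_mem i⟩
  set U : Set E3 := {x' : E3 | Metric.infDist x' T < 2*σ} with hU
  have hUopen : IsOpen U := isOpen_lt (continuous_infDist_pt T) continuous_const
  have hxU : x ∈ U := hx
  clear_value c T U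
  have heq : ∀ x' ∈ U, mollify ζ σ E x' = hsF ζ σ c x' := by
    intro x' hx'
    have hx'' : Metric.infDist x' T < 2*σ := by rw [hU] at hx'; exact hx'
    obtain ⟨p', hp'T, hp'd⟩ := (Metric.infDist_lt_iff hTne).mp hx''
    rw [hT] at hp'T
    have hp'cl := closure_cube_subset (toE3 i) hp'T.1
    have hp'2 : p' 2 = c := by rw [hc]; exact hp'T.2
    rw [mollify, hsF, ← integral_indicator (QE_measurable E),
      ← integral_indicator (halfspace_measurable c)]
    congr 1
    funext y
    by_cases hf : mker ζ σ (x' - y) = 0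
    · have hfy : σ⁻¹ ^ 3 * ζ (σ⁻¹ • (x' - y)) = 0 := hf
      have hz : ∀ (s : Set E3), s.indicator (fun y => σ⁻¹ ^ 3 * ζ (σ⁻¹ • (x' - y))) y = 0 := by
        intro s
        by_cases hy : y ∈ s
        · rw [Set.indicator_of_mem hy]; exact hfy
        · rw [Set.indicator_of_notMem hy]
      rw [hz, hz]
    · have hnear : ‖x' - y‖ < σ := by
        by_contra hge
        exact hf (mker_support hσ hsupp (x' - y) (not_lt.mp hge))
      have hyx : ∀ k, |y k - x' k| < σ := by
        intro k
        calc |y k - x' k| = |(y - x') k| := by rw [coord_sub]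
          _ ≤ ‖y - x'‖ := abs_coord_le _ _
          _ = ‖x' - y‖ := norm_sub_rev _ _
          _ < σ := hnear
      have hx'p : ∀ k, |x' k - p' k| < 2*σ := by
        intro k
        calc |x' k - p' k| = |(x' - p') k| := by rw [coord_sub]
          _ ≤ ‖x' - p'‖ := abs_coord_le _ _
          _ < 2*σ := by rw [← dist_eq_norm]; exact hp'd
      have hyi : ∀ k, |y k - (i k : ℝ)| < 3/4 := by
        intro k
        have h1 := abs_lt.mp (hyx k)
        have h2 := abs_lt.mp (hx'p k)
        have h3 : |p' k - (toE3 i) k| ≤ 1/2 := hp'cl k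
        have h3' := abs_le.mp h3
        have : (toE3 i) k = (i k : ℝ) := rfl
        rw [this] at h3'
        rw [abs_lt]
        constructor <;> linarith [h3'.1, h3'.2]
      have hy2 : |y 2 - c| < 1/4 := by
        have h1 := abs_lt.mp (hyx 2)
        have h2 := abs_lt.mp (hx'p 2)
        rw [abs_lt]
        rw [hp'2] at h2
        constructor <;> linarith
      have hiff := laminate_local E i h hh hE2 hE3 y hyi (by rw [← hc]; exact hy2)
      by_cases hy : y ∈ QE E
      · rw [Set.indicator_of_mem hy,
          Set.indicator_of_mem (show y ∈ {y : E3 | y 2 < c} by rw [hc]; exact hiff.mp hy)]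
      · rw [Set.indicator_of_notMem hy]
        rw [Set.indicator_of_notMem
          (show y ∉ {y : E3 | y 2 < c} from fun hcon => hy (hiff.mpr (by rw [← hc]; exact hcon)))]
  have heqv : mollify ζ σ E =ᶠ[𝓝 x] hsF ζ σ c :=
    Filter.eventuallyEq_of_mem (hUopen.mem_nhds hxU) heq
  obtain ⟨lam, hlam, hstruct⟩ := hsF_fderiv_structure hsm hσ hsupp hpos c x
  exact ⟨lam, hlam, fun v => by rw [heqv.fderiv_eq]; exact hstruct v⟩
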